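/- For real z > 0, the function f_q(z) = ∫₀¹ (1 + (1-ξ²)z/4)^q dξ at q = -3/2 equals 4/(z+4); that is, ∫₀¹ (1 + (1-ξ²)z/4)^{-3/2} dξ = 4/(z+4). -/

import Mathlib

/-- For `z > 0`, `∫₀¹ (1 + (1-ξ²)z/4)^{-3/2} dξ = 4/(z+4)`. -/
theorem stmt_4 (z : ℝ) (hz : 0 < z) :
    ∫ ξ in (0:ℝ)..1, (1 + (1 - ξ^2) * z / 4) ^ (-(3:ℝ)/2) = 4 / (z + 4) := by
  have ha : (0:ℝ) < 1 + z / 4 := by linarith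
  set F : ℝ → ℝ := fun ξ => ξ / ((1 + z/4) * Real.sqrt (1 + (1 - ξ^2) * z / 4)) with hF
  have hgpos : ∀ ξ ∈ Set.uIcc (0:ℝ) 1, (0:ℝ) < 1 + (1 - ξ^2) * z / 4 := by
    intro ξ hξ
    rw [Set.uIcc_of_le (by norm_num)] at hξ
    have h1 : ξ^2 ≤ 1 := by nlinarith [hξ.1, hξ.2]
    nlinarith
  have hderiv : ∀ ξ ∈ Set.uIcc (0:ℝ) 1,
      HasDerivAt F ((1 + (1 - ξ^2) * z / 4) ^ (-(3:ℝ)/2)) ξ := by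
    intro ξ hξ
    have hg : (0:ℝ) < 1 + (1 - ξ^2) * z / 4 := hgpos ξ hξ
    have hsq : Real.sqrt (1 + (1 - ξ^2) * z / 4) ≠ 0 :=
      ne_of_gt (Real.sqrt_pos.mpr hg)
    have hdg : HasDerivAt (fun x : ℝ => 1 + (1 - x^2) * z / 4) (-(ξ * z / 2)) ξ := by
      have h := (((hasDerivAt_pow 2 ξ).const_sub 1).mul_const z).div_const 4 |>.const_add 1
      refine h.congr_deriv (Eq.symm ?_)
      push_cast
      ring
    have hdsqrt : HasDerivAt (fun x : ℝ => Real.sqrt (1 + (1 - x^2) * z / 4))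
        (-(ξ * z / 2) / (2 * Real.sqrt (1 + (1 - ξ^2) * z / 4))) ξ :=
      hdg.sqrt (ne_of_gt hg)
    have hden : (1 + z/4) * Real.sqrt (1 + (1 - ξ^2) * z / 4) ≠ 0 :=
      mul_ne_zero (ne_of_gt ha) hsq
    have hdF := (hasDerivAt_id ξ).div (hdsqrt.const_mul (1 + z/4)) hden
    refine hdF.congr_deriv (Eq.symm ?_)
    have hsq2 : Real.sqrt (1 + (1 - ξ^2) * z / 4) ^ 2 = 1 + (1 - ξ^2) * z / 4 :=
      Real.sq_sqrt hg.le
    rw [show (-(3:ℝ)/2) = -(1 + 1/2) by norm_num, Real.rpow_neg hg.le,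
      Real.rpow_add hg, Real.rpow_one, ← Real.sqrt_eq_rpow]
    set s := Real.sqrt (1 + (1 - ξ^2) * z / 4) with hs
    have hs0 : s ≠ 0 := hsq
    rw [inv_eq_one_div, div_eq_div_iff (by positivity) (by positivity)]
    field_simp
    simp only [id_eq]
    linear_combination (4 * z * ξ^2) * hsq2
  have hint : IntervalIntegrable (fun ξ : ℝ => (1 + (1 - ξ^2) * z / 4) ^ (-(3:ℝ)/2))
      MeasureTheory.volume 0 1 := by
    apply ContinuousOn.intervalIntegrable
    apply ContinuousOn.rpow_const
    · fun_prop
    · intro x hx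
      exact Or.inl (ne_of_gt (hgpos x hx))
  have := intervalIntegral.integral_eq_sub_of_hasDerivAt hderiv hint
  rw [this]
  have h0 : F 0 = 0 := by simp [hF]
  have h1 : F 1 = 4 / (z + 4) := by
    simp only [hF]
    norm_num
    rw [inv_eq_one_div, div_eq_div_iff (by linarith) (by linarith)]
    ring
  rw [h0, h1, sub_zero]
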